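/- Let n ≥ 2 and let v_0,…,v_n be affinely independent points in ℝ^n forming an n-simplex S, with vertex Gramians G_0,…,G_n. If the inverse of every vertex Gramian G_ℓ is a weakly diagonally dominant Stieltjes matrix (i.e., S is a nonobtuse simplex), then every (n−1)×(n−1) principal submatrix of every vertex Gramian G_ℓ has an inverse that is a weakly diagonally dominant Stieltjes matrix (i.e., each facet of a nonobtuse simplex is itself a nonobtuse simplex). -/

import Mathlib

open Matrix Finset
open scoped RealInnerProductSpace

noncomputable section

/-- The vertex Gramian of the simplex with vertices `v` associated with vertex `v ℓ`. -/
def vGram {n : ℕ} (v : Fin (n + 1) → EuclideanSpace ℝ (Fin n)) (ℓ : Fin (n + 1)) :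
    Matrix {k : Fin (n + 1) // k ≠ ℓ} {k : Fin (n + 1) // k ≠ ℓ} ℝ :=
  Matrix.of fun i j => ⟪v i.1 - v ℓ, v j.1 - v ℓ⟫

/-- A Stieltjes matrix: symmetric positive definite with nonpositive off-diagonal entries. -/
def IsStieltjes {ι : Type*} [Fintype ι] (M : Matrix ι ι ℝ) : Prop :=
  M.PosDef ∧ ∀ i j, i ≠ j → M i j ≤ 0

/-- Weakly diagonally dominant: `M e ≥ 0` entrywise for the all-ones vector `e`. -/
def IsWDD {ι : Type*} [Fintype ι] (M : Matrix ι ι ℝ) : Prop :=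
  ∀ i, 0 ≤ ∑ j, M i j

/-- Pointwise weakly diagonally dominant: each diagonal entry is maximal in its row. -/
def PWDD {ι : Type*} (M : Matrix ι ι ℝ) : Prop :=
  ∀ i j, M i j ≤ M i i

/-- The orthogonal projection of `x` onto the affine span of `{v k : k ∈ s}`
lies in the convex hull of `{v k : k ∈ s}`. -/
def ProjInHull {n : ℕ} (x : EuclideanSpace ℝ (Fin n))
    (v : Fin (n + 1) → EuclideanSpace ℝ (Fin n)) (s : Set (Fin (n + 1))) : Prop :=
  ∃ p ∈ convexHull ℝ (v '' s), ∀ a ∈ s, ∀ b ∈ s, ⟪x - p, v a - v b⟫ = 0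

/-- All facets of the simplex are nonobtuse: each vertex `v i` projects, for each `j ≠ i`,
into the convex hull of the vertices other than `v i, v j`. -/
def FacetsNonobtuse {n : ℕ} (v : Fin (n + 1) → EuclideanSpace ℝ (Fin n)) : Prop :=
  ∀ i j : Fin (n + 1), i ≠ j → ProjInHull (v i) v {k | k ≠ i ∧ k ≠ j}

/-- `q` is an inward normal to the facet opposite `v j`. -/
def IsInwardNormal {n : ℕ} (v : Fin (n + 1) → EuclideanSpace ℝ (Fin n)) (j : Fin (n + 1))
    (q : EuclideanSpace ℝ (Fin n)) : Prop :=
  q ≠ 0 ∧ (∀ a b : Fin (n + 1), a ≠ j → b ≠ j → ⟪q, v a - v b⟫ = 0) ∧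
    ∀ k : Fin (n + 1), k ≠ j → 0 < ⟪q, v j - v k⟫

/-- The `j`-th column of `A` is a blocking column: no off-diagonal entry of column `j`
is minimal in its row. -/
def IsBlockingCol {ι : Type*} (A : Matrix ι ι ℝ) (j : ι) : Prop :=
  ∀ i, i ≠ j → ∃ k, A i k < A i j

/-- `A` is nonblocking: every column has an off-diagonal entry minimal in its row. -/
def IsNonblocking {ι : Type*} (A : Matrix ι ι ℝ) : Prop :=
  ∀ j, ∃ i, i ≠ j ∧ ∀ k, A i j ≤ A i k

/-- A (symmetric nonnegative) ultrametric matrix. -/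
def IsUltra {ι : Type*} (A : Matrix ι ι ℝ) : Prop :=
  (∀ i j, 0 ≤ A i j) ∧ (∀ i j, A i j ≤ A i i) ∧ ∀ i j k, min (A i k) (A k j) ≤ A i j

/-- The principal submatrix of `A` with rows and columns restricted to `s`. -/
def subMat {ι : Type*} (A : Matrix ι ι ℝ) (s : Finset ι) :
    Matrix {x // x ∈ s} {x // x ∈ s} ℝ :=
  A.submatrix (fun i => i.1) (fun j => j.1)

/-- The principal submatrix of `A` obtained by deleting row and column `m`. -/
def delMat {ι : Type*} (A : Matrix ι ι ℝ) (m : ι) : Matrix {i // i ≠ m} {i // i ≠ m} ℝ :=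
  A.submatrix (fun i => i.1) (fun j => j.1)


section AuxLemmas

set_option linter.unusedSectionVars false

variable {ι : Type*} [Fintype ι] [DecidableEq ι]

lemma sum_subtype_ne_aux (m : ι) (f : ι → ℝ) :
    ∑ k : {i // i ≠ m}, f k.1 = ∑ k, f k - f m := by
  rw [eq_sub_iff_add_eq, ← Finset.sum_subtype (Finset.univ.erase m)
    (fun x => by simp [Finset.mem_erase]) f]
  exact Finset.sum_erase_add _ _ (Finset.mem_univ m)

lemma delMat_posDef' {A : Matrix ι ι ℝ} (hA : A.PosDef) (m : ι) :
    (delMat A m).PosDef := by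
  refine Matrix.PosDef.of_dotProduct_mulVec_pos (hA.posSemidef.submatrix _).isHermitian fun x hx => ?_
  set y : ι → ℝ := fun k => if h : k = m then 0 else x ⟨k, h⟩ with hy
  have hym : y m = 0 := by simp [y]
  have hys : ∀ k : {i // i ≠ m}, y k.1 = x k := fun k => by simp [y, k.2]
  have hy0 : y ≠ 0 := by
    intro h0
    apply hx
    ext k
    have := congrFun h0 k.1
    simpa [hys k] using this
  have hpos := hA.dotProduct_mulVec_pos hy0
  have inner : ∀ i : ι, ∑ j, A i j * y j = ∑ j : {i // i ≠ m}, A i j.1 * x j := by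
    intro i
    have := sum_subtype_ne_aux m (fun j => A i j * y j)
    simp only [hym, mul_zero, sub_zero] at this
    rw [← this]
    exact Finset.sum_congr rfl fun k _ => by rw [hys k]
  have houter := sum_subtype_ne_aux m (fun i => y i * ∑ j, A i j * y j)
  simp only [hym, zero_mul, sub_zero] at houter
  have key : (star x) ⬝ᵥ ((delMat A m) *ᵥ x) = (star y) ⬝ᵥ (A *ᵥ y) := by
    simp only [dotProduct, mulVec, star_trivial, delMat, Matrix.submatrix_apply]
    rw [← houter]
    exact Finset.sum_congr rfl fun k _ => by rw [hys k, inner k.1]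
  rw [key]
  exact hpos

lemma schur_facet (A : Matrix ι ι ℝ)
    (hpd : (A⁻¹).PosDef) (hoff : ∀ i j, i ≠ j → A⁻¹ i j ≤ 0)
    (hwdd : ∀ i, 0 ≤ ∑ j, A⁻¹ i j) (m : ι) :
    ((delMat A m)⁻¹.PosDef ∧ ∀ i j, i ≠ j → (delMat A m)⁻¹ i j ≤ 0) ∧
      ∀ i, 0 ≤ ∑ j, (delMat A m)⁻¹ i j := by
  set M := A⁻¹ with hMdef
  have hApd : A.PosDef := Matrix.posDef_inv_iff.mp hpd
  have hAM : A * M = 1 :=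
    Matrix.mul_nonsing_inv A ((Matrix.isUnit_iff_isUnit_det A).mp hApd.isUnit)
  have hmm : 0 < M m m := by
    have := hpd.dotProduct_mulVec_pos (x := Pi.single m 1) (fun h0 => by simpa using congrFun h0 m)
    simpa [dotProduct, Matrix.mulVec_single, Pi.single_apply] using this
  set N : Matrix {i // i ≠ m} {i // i ≠ m} ℝ :=
    Matrix.of (fun i j => M i.1 j.1 - M i.1 m * M m j.1 / M m m) with hN
  have hinv : (delMat A m)⁻¹ = N := by
    apply Matrix.inv_eq_right_inv
    ext i j
    simp only [Matrix.mul_apply, delMat, Matrix.submatrix_apply, hN, Matrix.of_apply]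
    rw [sum_subtype_ne_aux m (fun k => A i.1 k * (M k j.1 - M k m * M m j.1 / M m m))]
    have h1 : ∑ k, A i.1 k * (M k j.1 - M k m * M m j.1 / M m m)
        = ∑ k, A i.1 k * M k j.1 - (∑ k, A i.1 k * M k m) * (M m j.1 / M m m) := by
      simp only [Finset.sum_mul]
      rw [← Finset.sum_sub_distrib]
      exact Finset.sum_congr rfl fun k _ => by ring
    have hAMij : ∑ k, A i.1 k * M k j.1 = (1 : Matrix ι ι ℝ) i.1 j.1 := by
      rw [← Matrix.mul_apply, hAM]
    have hAMim : ∑ k, A i.1 k * M k m = 0 := by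
      rw [← Matrix.mul_apply, hAM, Matrix.one_apply_ne i.2]
    have hfm : A i.1 m * (M m j.1 - M m m * M m j.1 / M m m) = 0 := by
      rw [mul_div_cancel_left₀ _ hmm.ne', sub_self, mul_zero]
    rw [h1, hAMij, hAMim, hfm, zero_mul, sub_zero, sub_zero]
    by_cases hij : i = j
    · subst hij
      simp [Matrix.one_apply]
    · rw [Matrix.one_apply_ne (fun e => hij (Subtype.ext e)),
        Matrix.one_apply_ne hij]
  rw [hinv]
  refine ⟨⟨?_, ?_⟩, ?_⟩
  · rw [← hinv]
    exact (delMat_posDef' hApd m).inv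
  · intro i j hij
    have h1 : M i.1 j.1 ≤ 0 := hoff _ _ (fun e => hij (Subtype.ext e))
    have h2 : M i.1 m ≤ 0 := hoff _ _ i.2
    have h3 : M m j.1 ≤ 0 := hoff _ _ (Ne.symm j.2)
    have h4 : 0 ≤ M i.1 m * M m j.1 / M m m :=
      div_nonneg (by nlinarith) hmm.le
    have : N i j = M i.1 j.1 - M i.1 m * M m j.1 / M m m := rfl
    rw [this]
    linarith
  · intro i
    have hsum : ∑ j : {i // i ≠ m}, N i j
        = (∑ j, M i.1 j) - (M i.1 m / M m m) * ∑ j, M m j := by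
      rw [hN]
      simp only [Matrix.of_apply]
      rw [sum_subtype_ne_aux m (fun j => M i.1 j - M i.1 m * M m j / M m m)]
      have hfm : M i.1 m - M i.1 m * M m m / M m m = 0 := by
        rw [mul_div_cancel_right₀ _ hmm.ne', sub_self]
      rw [Finset.sum_sub_distrib, hfm, sub_zero, Finset.mul_sum]
      congr 1
      exact Finset.sum_congr rfl fun k _ => by ring
    rw [hsum]
    have h2 : M i.1 m ≤ 0 := hoff _ _ i.2
    have h5 : M i.1 m / M m m ≤ 0 := div_nonpos_of_nonpos_of_nonneg h2 hmm.le
    have h6 : (M i.1 m / M m m) * ∑ j, M m j ≤ 0 :=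
      mul_nonpos_of_nonpos_of_nonneg h5 (hwdd m)
    have h7 : 0 ≤ ∑ j, M i.1 j := hwdd i.1
    linarith

end AuxLemmas

section Tetra

variable {V : Type*} [NormedAddCommGroup V] [InnerProductSpace ℝ V]

/-- The triangle with vertices `a, b, c` is nonobtuse. -/
def NonobtuseTri (a b c : V) : Prop :=
  0 ≤ ⟪b - a, c - a⟫ ∧ 0 ≤ ⟪a - b, c - b⟫ ∧ 0 ≤ ⟪a - c, b - c⟫

/-- The sub-orthocentric set of the triangle `a b c`: the union over the vertices of the
closed segments from the vertex to the orthocenter. -/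
def SubOrthoSet (a b c : V) : Set V :=
  {x | ∃ h, h ∈ affineSpan ℝ ({a, b, c} : Set V) ∧
    ⟪h - a, b - c⟫ = 0 ∧ ⟪h - b, a - c⟫ = 0 ∧
    (x ∈ segment ℝ a h ∨ x ∈ segment ℝ b h ∨ x ∈ segment ℝ c h)}

/-- `p` is the orthogonal projection of `x` onto the affine span of `{a, b, c}`. -/
def IsOrthProjTri (x p a b c : V) : Prop :=
  p ∈ affineSpan ℝ ({a, b, c} : Set V) ∧ ⟪x - p, b - a⟫ = 0 ∧ ⟪x - p, c - a⟫ = 0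

/-- A sub-orthocentric tetrahedron: all triangular faces are nonobtuse and each vertex
projects orthogonally into the sub-orthocentric set of its opposite face. -/
def IsSubOrthoTetra (w : Fin 4 → V) : Prop :=
  ∀ i : Fin 4,
    NonobtuseTri (w (i.succAbove 0)) (w (i.succAbove 1)) (w (i.succAbove 2)) ∧
    ∃ p, IsOrthProjTri (w i) p (w (i.succAbove 0)) (w (i.succAbove 1)) (w (i.succAbove 2)) ∧
      p ∈ SubOrthoSet (w (i.succAbove 0)) (w (i.succAbove 1)) (w (i.succAbove 2))

end Tetra

theorem stmt2 (n : ℕ) (hn : 2 ≤ n) (v : Fin (n + 1) → EuclideanSpace ℝ (Fin n))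
    (hv : AffineIndependent ℝ v)
    (h : ∀ ℓ, IsStieltjes (vGram v ℓ)⁻¹ ∧ IsWDD (vGram v ℓ)⁻¹) :
    ∀ ℓ (m : {k : Fin (n + 1) // k ≠ ℓ}),
      IsStieltjes (delMat (vGram v ℓ) m)⁻¹ ∧ IsWDD (delMat (vGram v ℓ) m)⁻¹ := by
  intro ℓ m
  obtain ⟨⟨hpd, hoff⟩, hwdd⟩ := h ℓ
  obtain ⟨⟨h1, h2⟩, h3⟩ := schur_facet (vGram v ℓ) hpd hoff hwdd m
  exact ⟨⟨h1, h2⟩, h3⟩
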